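/- For every a with 0 < a < √2 such that a ≠ τ0(a) and b2² + b3² ≠ 0, the explicit functions z1, z2, z3 : [−1,0] → ℝ² and ψ1, ψ2, ψ3 : [0,1] → ℝ^{2*} defined in the context satisfy the duality relations ⟨ψ_i, z_j⟩ = δ_{ij} for 1 ≤ i,j ≤ 3, where ⟨ψ, z⟩ = ψ(0) z(0) + ∫₀¹ ψ(s) B z(s−1) ds with B the 2×2 matrix with entries B₁₁ = B₁₂ = B₂₂ = 0 and B₂₁ = τ0. -/

import Mathlib

open Real

/-- `ω0(a) = √(2 - a²)`. -/
noncomputable def omega0 (a : ℝ) : ℝ := Real.sqrt (2 - a ^ 2)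

/-- The critical delay `τ0(a)`. -/
noncomputable def tau0 (a : ℝ) : ℝ :=
  if 1 < a then Real.arcsin (a * omega0 a) / omega0 a
  else (Real.pi - Real.arcsin (a * omega0 a)) / omega0 a

/-- `b2 = (1/2)(a − τ0 cos(τ0 ω0))`. -/
noncomputable def bb2 (a : ℝ) : ℝ := (1 / 2) * (a - tau0 a * Real.cos (tau0 a * omega0 a))

/-- `b3 = −ω0 + (τ0/2) sin(τ0 ω0)`. -/
noncomputable def bb3 (a : ℝ) : ℝ := -omega0 a + (tau0 a / 2) * Real.sin (tau0 a * omega0 a)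

/-- The column basis functions `z1, z2, z3 : [−1,0] → ℝ²`. -/
noncomputable def zfun (a : ℝ) : Fin 3 → ℝ → ℝ × ℝ
  | 0 => fun _ => (1, 0)
  | 1 => fun θ => (Real.sin (tau0 a * omega0 a * θ), omega0 a * Real.cos (tau0 a * omega0 a * θ))
  | 2 => fun θ => (Real.cos (tau0 a * omega0 a * θ), -omega0 a * Real.sin (tau0 a * omega0 a * θ))

/-- The row basis functions `ψ1, ψ2, ψ3 : [0,1] → ℝ^{2*}` (a row vector is recorded
as a pair of real components). -/
noncomputable def psifun (a : ℝ) : Fin 3 → ℝ → ℝ × ℝ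
  | 0 => fun _ => (a / (a - tau0 a), -(1 / (a - tau0 a)))
  | 1 => fun s =>
      (1 / (2 * (bb2 a ^ 2 + bb3 a ^ 2)) *
        (omega0 a * (tau0 a - a) * Real.cos (tau0 a * omega0 a * s) +
          (4 - a ^ 2 - a * tau0 a) * Real.sin (tau0 a * omega0 a * s)),
       1 / (2 * (bb2 a ^ 2 + bb3 a ^ 2)) *
        (-(2 * bb2 a) * Real.sin (tau0 a * omega0 a * s) -
          2 * bb3 a * Real.cos (tau0 a * omega0 a * s)))
  | 2 => fun s =>
      (1 / (2 * (bb2 a ^ 2 + bb3 a ^ 2)) *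
        ((4 - a ^ 2 - a * tau0 a) * Real.cos (tau0 a * omega0 a * s) -
          omega0 a * (tau0 a - a) * Real.sin (tau0 a * omega0 a * s)),
       1 / (2 * (bb2 a ^ 2 + bb3 a ^ 2)) *
        (2 * bb3 a * Real.sin (tau0 a * omega0 a * s) -
          2 * bb2 a * Real.cos (tau0 a * omega0 a * s)))

/-- The bilinear form `⟨ψ, z⟩ = ψ(0) z(0) + ∫₀¹ ψ(s) B z(s−1) ds`, where
`B` is the 2×2 matrix with `B₂₁ = τ0` and all other entries `0`; hence
`ψ(s) B z(s−1) = ψ₂(s) · τ0 · z₁(s−1)`. -/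
noncomputable def pairing (a : ℝ) (ψ z : ℝ → ℝ × ℝ) : ℝ :=
  (ψ 0).1 * (z 0).1 + (ψ 0).2 * (z 0).2 +
    ∫ s in (0 : ℝ)..1, (ψ s).2 * (tau0 a * (z (s - 1)).1)

/-- the explicit bases `(ψ1, ψ2, ψ3)` and `(z1, z2, z3)` are dual:
`⟨ψᵢ, zⱼ⟩ = δᵢⱼ`. -/


lemma master (c : ℝ) (hc : c ≠ 0) (p q r d e f : ℝ) :
    (∫ s in (0:ℝ)..1, (p + q * Real.sin (c*s) + r * Real.cos (c*s) + d * Real.sin (c*s)^2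
      + e * Real.cos (c*s)^2 + f * (Real.sin (c*s) * Real.cos (c*s))))
    = p + q * ((1 - Real.cos c)/c) + r * (Real.sin c / c)
      + d * (1/2 - Real.sin c * Real.cos c/(2*c)) + e * (1/2 + Real.sin c * Real.cos c/(2*c))
      + f * (Real.sin c^2/(2*c)) := by
  have hS : ∀ x : ℝ, HasDerivAt (fun s => Real.sin (c*s)) (c * Real.cos (c*x)) x := by
    intro x
    simpa [mul_comm, Function.comp_def] using (Real.hasDerivAt_sin (c*x)).comp x ((hasDerivAt_id x).const_mul c)
  have hC : ∀ x : ℝ, HasDerivAt (fun s => Real.cos (c*s)) (-(c * Real.sin (c*x))) x := by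
    intro x
    simpa [mul_comm, Function.comp_def] using (Real.hasDerivAt_cos (c*x)).comp x ((hasDerivAt_id x).const_mul c)
  have key := intervalIntegral.integral_eq_sub_of_hasDerivAt
    (f := fun s => p*s - q * Real.cos (c*s)/c + r * Real.sin (c*s)/c
      + d * (s/2 - Real.sin (c*s) * Real.cos (c*s)/(2*c))
      + e * (s/2 + Real.sin (c*s) * Real.cos (c*s)/(2*c))
      + f * (Real.sin (c*s)^2/(2*c)))
    (f' := fun s => p + q * Real.sin (c*s) + r * Real.cos (c*s) + d * Real.sin (c*s)^2
      + e * Real.cos (c*s)^2 + f * (Real.sin (c*s) * Real.cos (c*s)))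
    (a := (0:ℝ)) (b := 1)
    (by
      intro x hx
      have h1 : HasDerivAt (fun s : ℝ => p*s) p x := by
        simpa using (hasDerivAt_id x).const_mul p
      have h2 := ((hC x).const_mul q).div_const c
      have h3 := ((hS x).const_mul r).div_const c
      have hprod := (hS x).mul (hC x)
      have h4 : HasDerivAt (fun s : ℝ => d * (s/2 - Real.sin (c*s) * Real.cos (c*s)/(2*c)))
          (d * (1/2 - (c * Real.cos (c*x) * Real.cos (c*x) + Real.sin (c*x) * -(c * Real.sin (c*x)))/(2*c))) x := by
        exact (((hasDerivAt_id x).div_const 2).sub (hprod.div_const (2*c))).const_mul d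
      have h5 : HasDerivAt (fun s : ℝ => e * (s/2 + Real.sin (c*s) * Real.cos (c*s)/(2*c)))
          (e * (1/2 + (c * Real.cos (c*x) * Real.cos (c*x) + Real.sin (c*x) * -(c * Real.sin (c*x)))/(2*c))) x := by
        exact (((hasDerivAt_id x).div_const 2).add (hprod.div_const (2*c))).const_mul e
      have h6 : HasDerivAt (fun s : ℝ => f * (Real.sin (c*s)^2/(2*c)))
          (f * ((2 * Real.sin (c*x) * (c * Real.cos (c*x)))/(2*c))) x := by
        have := (hS x).pow 2
        simpa [mul_comm, mul_assoc, mul_left_comm] using (this.div_const (2*c)).const_mul f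
      have := ((((h1.sub h2).add h3).add h4).add h5).add h6
      convert this using 1
      case e'_8 => rfl
      have hsc : Real.sin (c*x)^2 + Real.cos (c*x)^2 = 1 := Real.sin_sq_add_cos_sq _
      field_simp
      linear_combination (d+e) * hsc
      )
    (by
      apply Continuous.intervalIntegrable
      fun_prop)
  rw [key]
  simp
  field_simp
  ring


section facts
variable {a : ℝ} (ha0 : 0 < a) (ha2 : a < Real.sqrt 2)
include ha0 ha2

lemma sq_lt : a ^ 2 < 2 := by
  nlinarith [Real.sq_sqrt (by norm_num : (2:ℝ) ≥ 0), Real.sqrt_nonneg 2]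

lemma omega_sq : omega0 a ^ 2 = 2 - a ^ 2 := by
  have := sq_lt ha0 ha2
  rw [omega0, Real.sq_sqrt (by linarith)]

lemma omega_pos : 0 < omega0 a := by
  have := sq_lt ha0 ha2
  exact Real.sqrt_pos.2 (by linarith)

lemma aw_le : a * omega0 a ≤ 1 := by
  have h1 := omega_sq ha0 ha2
  have h2 := omega_pos ha0 ha2
  nlinarith [sq_nonneg (1 - a^2), sq_nonneg (a * omega0 a - 1), sq_nonneg (a * omega0 a + 1)]

lemma aw_pos : 0 < a * omega0 a := mul_pos ha0 (omega_pos ha0 ha2)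

lemma tau_omega_eq : tau0 a * omega0 a =
    if 1 < a then Real.arcsin (a * omega0 a) else Real.pi - Real.arcsin (a * omega0 a) := by
  have h2 := (omega_pos ha0 ha2).ne'
  rw [tau0]
  split <;> field_simp

lemma sin_tau_omega : Real.sin (tau0 a * omega0 a) = a * omega0 a := by
  have h1 := aw_le ha0 ha2
  have h0 := aw_pos ha0 ha2
  rw [tau_omega_eq ha0 ha2]
  split
  · exact Real.sin_arcsin (by linarith) h1
  · rw [Real.sin_pi_sub]; exact Real.sin_arcsin (by linarith) h1

lemma cos_tau_omega : Real.cos (tau0 a * omega0 a) = a ^ 2 - 1 := by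
  have h1 := aw_le ha0 ha2
  have h0 := aw_pos ha0 ha2
  have hw2 := omega_sq ha0 ha2
  have hsq : 1 - (a * omega0 a) ^ 2 = (a^2 - 1)^2 := by nlinarith
  rw [tau_omega_eq ha0 ha2]
  split
  · rename_i h
    rw [Real.cos_arcsin, hsq, Real.sqrt_sq_eq_abs, abs_of_nonneg (by nlinarith)]
  · rename_i h
    push_neg at h
    rw [Real.cos_pi_sub, Real.cos_arcsin, hsq, Real.sqrt_sq_eq_abs,
      abs_of_nonpos (by nlinarith)]
    ring

lemma tau_omega_pos : 0 < tau0 a * omega0 a := by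
  have h0 := aw_pos ha0 ha2
  have h1 := aw_le ha0 ha2
  rw [tau_omega_eq ha0 ha2]
  split
  · exact Real.arcsin_pos.2 h0
  · have := Real.arcsin_le_pi_div_two (a * omega0 a)
    nlinarith [Real.pi_pos]

lemma tau_pos : 0 < tau0 a := by
  have h := tau_omega_pos ha0 ha2
  have hw := omega_pos ha0 ha2
  nlinarith

end facts

set_option maxHeartbeats 1600000 in
theorem duality_relations (a : ℝ) (ha0 : 0 < a) (ha2 : a < Real.sqrt 2)
    (hne : a ≠ tau0 a) (hb : bb2 a ^ 2 + bb3 a ^ 2 ≠ 0) :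
    ∀ i j : Fin 3, pairing a (psifun a i) (zfun a j) = if i = j then 1 else 0 := by
  have hw2 : omega0 a ^ 2 = 2 - a ^ 2 := omega_sq ha0 ha2
  have hwpos : 0 < omega0 a := omega_pos ha0 ha2
  have hS : Real.sin (tau0 a * omega0 a) = a * omega0 a := sin_tau_omega ha0 ha2
  have hC : Real.cos (tau0 a * omega0 a) = a ^ 2 - 1 := cos_tau_omega ha0 ha2
  have htpos : 0 < tau0 a := tau_pos ha0 ha2
  have hcne : tau0 a * omega0 a ≠ 0 := (tau_omega_pos ha0 ha2).ne'
  have hat : a - tau0 a ≠ 0 := sub_ne_zero.2 hne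
  have hb2e : bb2 a = (a - tau0 a * (a ^ 2 - 1)) / 2 := by rw [bb2, hC]; ring
  have hb3e : bb3 a = (tau0 a * a / 2 - 1) * omega0 a := by rw [bb3, hS]; ring
  have hbne : ((a - tau0 a * (a ^ 2 - 1)) / 2) ^ 2 + ((tau0 a * a / 2 - 1) * omega0 a) ^ 2 ≠ 0 := by
    rw [← hb2e, ← hb3e]; exact hb
  have hbne2 : (a - tau0 a * (a ^ 2 - 1)) ^ 2 + ((tau0 a * a - 2) * omega0 a) ^ 2 ≠ 0 := by
    intro h
    exact hbne (by linear_combination h / 4)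
  have hbne3 : (a - tau0 a * (a ^ 2 - 1)) ^ 2 + (a * tau0 a - 2) ^ 2 * omega0 a ^ 2 ≠ 0 := by
    intro h
    exact hbne2 (by linear_combination h)
  intro i j
  fin_cases i <;> fin_cases j
  · -- case i=0, j=0
    show pairing a (psifun a 0) (zfun a 0) = 1
    have hI := intervalIntegral.integral_congr (a := (0:ℝ)) (b := 1) (μ := MeasureTheory.volume)
      (f := fun s => (psifun a 0 s).2 * (tau0 a * (zfun a 0 (s - 1)).1))
      (g := fun s => (tau0 a * ((-(1/(a - tau0 a))) * 1)) + (tau0 a * ((-(1/(a - tau0 a))) * 0 + 0 * 1)) * Real.sin (tau0 a * omega0 a * s)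
        + (tau0 a * ((-(1/(a - tau0 a))) * 0 + 0 * 1)) * Real.cos (tau0 a * omega0 a * s)
        + (tau0 a * (0 * 0)) * Real.sin (tau0 a * omega0 a * s) ^ 2
        + (tau0 a * (0 * 0)) * Real.cos (tau0 a * omega0 a * s) ^ 2
        + (tau0 a * (0 * 0 + 0 * 0)) * (Real.sin (tau0 a * omega0 a * s) * Real.cos (tau0 a * omega0 a * s)))
      (fun s _ => by
        have hx : tau0 a * omega0 a * (s - 1) = tau0 a * omega0 a * s - tau0 a * omega0 a := by
          ring
        simp only [psifun, zfun, hx, Real.sin_sub, Real.cos_sub]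
        ring)
    unfold pairing
    rw [hI, master (tau0 a * omega0 a) hcne]
    simp only [psifun, zfun, mul_zero, Real.sin_zero, Real.cos_zero, mul_one, zero_mul, add_zero,
      hb2e, hb3e, hS, hC]
    field_simp [hat, hbne2, hbne3, hcne, hwpos.ne', htpos.ne']
    linear_combination (0) * hw2
  · -- case i=0, j=1
    show pairing a (psifun a 0) (zfun a 1) = 0
    have hI := intervalIntegral.integral_congr (a := (0:ℝ)) (b := 1) (μ := MeasureTheory.volume)
      (f := fun s => (psifun a 0 s).2 * (tau0 a * (zfun a 1 (s - 1)).1))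
      (g := fun s => (tau0 a * ((-(1/(a - tau0 a))) * 0)) + (tau0 a * ((-(1/(a - tau0 a))) * Real.cos (tau0 a * omega0 a) + 0 * 0)) * Real.sin (tau0 a * omega0 a * s)
        + (tau0 a * ((-(1/(a - tau0 a))) * (-Real.sin (tau0 a * omega0 a)) + 0 * 0)) * Real.cos (tau0 a * omega0 a * s)
        + (tau0 a * (0 * Real.cos (tau0 a * omega0 a))) * Real.sin (tau0 a * omega0 a * s) ^ 2
        + (tau0 a * (0 * (-Real.sin (tau0 a * omega0 a)))) * Real.cos (tau0 a * omega0 a * s) ^ 2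
        + (tau0 a * (0 * (-Real.sin (tau0 a * omega0 a)) + 0 * Real.cos (tau0 a * omega0 a))) * (Real.sin (tau0 a * omega0 a * s) * Real.cos (tau0 a * omega0 a * s)))
      (fun s _ => by
        have hx : tau0 a * omega0 a * (s - 1) = tau0 a * omega0 a * s - tau0 a * omega0 a := by
          ring
        simp only [psifun, zfun, hx, Real.sin_sub, Real.cos_sub]
        ring)
    unfold pairing
    rw [hI, master (tau0 a * omega0 a) hcne]
    simp only [psifun, zfun, mul_zero, Real.sin_zero, Real.cos_zero, mul_one, zero_mul, add_zero,
      hb2e, hb3e, hS, hC]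
    field_simp [hat, hbne2, hbne3, hcne, hwpos.ne', htpos.ne']
    linear_combination ((-1) + (1)*a^2) * hw2
  · -- case i=0, j=2
    show pairing a (psifun a 0) (zfun a 2) = 0
    have hI := intervalIntegral.integral_congr (a := (0:ℝ)) (b := 1) (μ := MeasureTheory.volume)
      (f := fun s => (psifun a 0 s).2 * (tau0 a * (zfun a 2 (s - 1)).1))
      (g := fun s => (tau0 a * ((-(1/(a - tau0 a))) * 0)) + (tau0 a * ((-(1/(a - tau0 a))) * Real.sin (tau0 a * omega0 a) + 0 * 0)) * Real.sin (tau0 a * omega0 a * s)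
        + (tau0 a * ((-(1/(a - tau0 a))) * Real.cos (tau0 a * omega0 a) + 0 * 0)) * Real.cos (tau0 a * omega0 a * s)
        + (tau0 a * (0 * Real.sin (tau0 a * omega0 a))) * Real.sin (tau0 a * omega0 a * s) ^ 2
        + (tau0 a * (0 * Real.cos (tau0 a * omega0 a))) * Real.cos (tau0 a * omega0 a * s) ^ 2
        + (tau0 a * (0 * Real.cos (tau0 a * omega0 a) + 0 * Real.sin (tau0 a * omega0 a))) * (Real.sin (tau0 a * omega0 a * s) * Real.cos (tau0 a * omega0 a * s)))
      (fun s _ => by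
        have hx : tau0 a * omega0 a * (s - 1) = tau0 a * omega0 a * s - tau0 a * omega0 a := by
          ring
        simp only [psifun, zfun, hx, Real.sin_sub, Real.cos_sub]
        ring)
    unfold pairing
    rw [hI, master (tau0 a * omega0 a) hcne]
    simp only [psifun, zfun, mul_zero, Real.sin_zero, Real.cos_zero, mul_one, zero_mul, add_zero,
      hb2e, hb3e, hS, hC]
    field_simp [hat, hbne2, hbne3, hcne, hwpos.ne', htpos.ne']
    linear_combination (0) * hw2
  · -- case i=1, j=0
    show pairing a (psifun a 1) (zfun a 0) = 0
    have hI := intervalIntegral.integral_congr (a := (0:ℝ)) (b := 1) (μ := MeasureTheory.volume)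
      (f := fun s => (psifun a 1 s).2 * (tau0 a * (zfun a 0 (s - 1)).1))
      (g := fun s => (tau0 a * (0 * 1)) + (tau0 a * (0 * 0 + (-2 * bb2 a * (1 / (2 * (bb2 a ^ 2 + bb3 a ^ 2)))) * 1)) * Real.sin (tau0 a * omega0 a * s)
        + (tau0 a * (0 * 0 + (-2 * bb3 a * (1 / (2 * (bb2 a ^ 2 + bb3 a ^ 2)))) * 1)) * Real.cos (tau0 a * omega0 a * s)
        + (tau0 a * ((-2 * bb2 a * (1 / (2 * (bb2 a ^ 2 + bb3 a ^ 2)))) * 0)) * Real.sin (tau0 a * omega0 a * s) ^ 2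
        + (tau0 a * ((-2 * bb3 a * (1 / (2 * (bb2 a ^ 2 + bb3 a ^ 2)))) * 0)) * Real.cos (tau0 a * omega0 a * s) ^ 2
        + (tau0 a * ((-2 * bb2 a * (1 / (2 * (bb2 a ^ 2 + bb3 a ^ 2)))) * 0 + (-2 * bb3 a * (1 / (2 * (bb2 a ^ 2 + bb3 a ^ 2)))) * 0)) * (Real.sin (tau0 a * omega0 a * s) * Real.cos (tau0 a * omega0 a * s)))
      (fun s _ => by
        have hx : tau0 a * omega0 a * (s - 1) = tau0 a * omega0 a * s - tau0 a * omega0 a := by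
          ring
        simp only [psifun, zfun, hx, Real.sin_sub, Real.cos_sub]
        ring)
    unfold pairing
    rw [hI, master (tau0 a * omega0 a) hcne]
    simp only [psifun, zfun, mul_zero, Real.sin_zero, Real.cos_zero, mul_one, zero_mul, add_zero,
      hb2e, hb3e, hS, hC]
    field_simp [hat, hbne2, hbne3, hcne, hwpos.ne', htpos.ne']
    linear_combination ((2)*(tau0 a)^1 + (2)*a^1 + (-2)*a^2*(tau0 a)^1) * hw2
  · -- case i=1, j=1
    show pairing a (psifun a 1) (zfun a 1) = 1
    have hI := intervalIntegral.integral_congr (a := (0:ℝ)) (b := 1) (μ := MeasureTheory.volume)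
      (f := fun s => (psifun a 1 s).2 * (tau0 a * (zfun a 1 (s - 1)).1))
      (g := fun s => (tau0 a * (0 * 0)) + (tau0 a * (0 * Real.cos (tau0 a * omega0 a) + (-2 * bb2 a * (1 / (2 * (bb2 a ^ 2 + bb3 a ^ 2)))) * 0)) * Real.sin (tau0 a * omega0 a * s)
        + (tau0 a * (0 * (-Real.sin (tau0 a * omega0 a)) + (-2 * bb3 a * (1 / (2 * (bb2 a ^ 2 + bb3 a ^ 2)))) * 0)) * Real.cos (tau0 a * omega0 a * s)
        + (tau0 a * ((-2 * bb2 a * (1 / (2 * (bb2 a ^ 2 + bb3 a ^ 2)))) * Real.cos (tau0 a * omega0 a))) * Real.sin (tau0 a * omega0 a * s) ^ 2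
        + (tau0 a * ((-2 * bb3 a * (1 / (2 * (bb2 a ^ 2 + bb3 a ^ 2)))) * (-Real.sin (tau0 a * omega0 a)))) * Real.cos (tau0 a * omega0 a * s) ^ 2
        + (tau0 a * ((-2 * bb2 a * (1 / (2 * (bb2 a ^ 2 + bb3 a ^ 2)))) * (-Real.sin (tau0 a * omega0 a)) + (-2 * bb3 a * (1 / (2 * (bb2 a ^ 2 + bb3 a ^ 2)))) * Real.cos (tau0 a * omega0 a))) * (Real.sin (tau0 a * omega0 a * s) * Real.cos (tau0 a * omega0 a * s)))
      (fun s _ => by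
        have hx : tau0 a * omega0 a * (s - 1) = tau0 a * omega0 a * s - tau0 a * omega0 a := by
          ring
        simp only [psifun, zfun, hx, Real.sin_sub, Real.cos_sub]
        ring)
    unfold pairing
    rw [hI, master (tau0 a * omega0 a) hcne]
    simp only [psifun, zfun, mul_zero, Real.sin_zero, Real.cos_zero, mul_one, zero_mul, add_zero,
      hb2e, hb3e, hS, hC]
    field_simp [hat, hbne2, hbne3, hcne, hwpos.ne', htpos.ne']
    linear_combination ((1)*a^3*(tau0 a)^1 + (1)*a^4 + (-1)*a^5*(tau0 a)^1) * hw2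
  · -- case i=1, j=2
    show pairing a (psifun a 1) (zfun a 2) = 0
    have hI := intervalIntegral.integral_congr (a := (0:ℝ)) (b := 1) (μ := MeasureTheory.volume)
      (f := fun s => (psifun a 1 s).2 * (tau0 a * (zfun a 2 (s - 1)).1))
      (g := fun s => (tau0 a * (0 * 0)) + (tau0 a * (0 * Real.sin (tau0 a * omega0 a) + (-2 * bb2 a * (1 / (2 * (bb2 a ^ 2 + bb3 a ^ 2)))) * 0)) * Real.sin (tau0 a * omega0 a * s)
        + (tau0 a * (0 * Real.cos (tau0 a * omega0 a) + (-2 * bb3 a * (1 / (2 * (bb2 a ^ 2 + bb3 a ^ 2)))) * 0)) * Real.cos (tau0 a * omega0 a * s)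
        + (tau0 a * ((-2 * bb2 a * (1 / (2 * (bb2 a ^ 2 + bb3 a ^ 2)))) * Real.sin (tau0 a * omega0 a))) * Real.sin (tau0 a * omega0 a * s) ^ 2
        + (tau0 a * ((-2 * bb3 a * (1 / (2 * (bb2 a ^ 2 + bb3 a ^ 2)))) * Real.cos (tau0 a * omega0 a))) * Real.cos (tau0 a * omega0 a * s) ^ 2
        + (tau0 a * ((-2 * bb2 a * (1 / (2 * (bb2 a ^ 2 + bb3 a ^ 2)))) * Real.cos (tau0 a * omega0 a) + (-2 * bb3 a * (1 / (2 * (bb2 a ^ 2 + bb3 a ^ 2)))) * Real.sin (tau0 a * omega0 a))) * (Real.sin (tau0 a * omega0 a * s) * Real.cos (tau0 a * omega0 a * s)))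
      (fun s _ => by
        have hx : tau0 a * omega0 a * (s - 1) = tau0 a * omega0 a * s - tau0 a * omega0 a := by
          ring
        simp only [psifun, zfun, hx, Real.sin_sub, Real.cos_sub]
        ring)
    unfold pairing
    rw [hI, master (tau0 a * omega0 a) hcne]
    simp only [psifun, zfun, mul_zero, Real.sin_zero, Real.cos_zero, mul_one, zero_mul, add_zero,
      hb2e, hb3e, hS, hC]
    field_simp [hat, hbne2, hbne3, hcne, hwpos.ne', htpos.ne']
    linear_combination ((2)*a^3*(omega0 a)^1 + (-1)*a^4*(tau0 a)^1*(omega0 a)^1) * hw2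
  · -- case i=2, j=0
    show pairing a (psifun a 2) (zfun a 0) = 0
    have hI := intervalIntegral.integral_congr (a := (0:ℝ)) (b := 1) (μ := MeasureTheory.volume)
      (f := fun s => (psifun a 2 s).2 * (tau0 a * (zfun a 0 (s - 1)).1))
      (g := fun s => (tau0 a * (0 * 1)) + (tau0 a * (0 * 0 + (2 * bb3 a * (1 / (2 * (bb2 a ^ 2 + bb3 a ^ 2)))) * 1)) * Real.sin (tau0 a * omega0 a * s)
        + (tau0 a * (0 * 0 + (-2 * bb2 a * (1 / (2 * (bb2 a ^ 2 + bb3 a ^ 2)))) * 1)) * Real.cos (tau0 a * omega0 a * s)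
        + (tau0 a * ((2 * bb3 a * (1 / (2 * (bb2 a ^ 2 + bb3 a ^ 2)))) * 0)) * Real.sin (tau0 a * omega0 a * s) ^ 2
        + (tau0 a * ((-2 * bb2 a * (1 / (2 * (bb2 a ^ 2 + bb3 a ^ 2)))) * 0)) * Real.cos (tau0 a * omega0 a * s) ^ 2
        + (tau0 a * ((2 * bb3 a * (1 / (2 * (bb2 a ^ 2 + bb3 a ^ 2)))) * 0 + (-2 * bb2 a * (1 / (2 * (bb2 a ^ 2 + bb3 a ^ 2)))) * 0)) * (Real.sin (tau0 a * omega0 a * s) * Real.cos (tau0 a * omega0 a * s)))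
      (fun s _ => by
        have hx : tau0 a * omega0 a * (s - 1) = tau0 a * omega0 a * s - tau0 a * omega0 a := by
          ring
        simp only [psifun, zfun, hx, Real.sin_sub, Real.cos_sub]
        ring)
    unfold pairing
    rw [hI, master (tau0 a * omega0 a) hcne]
    simp only [psifun, zfun, mul_zero, Real.sin_zero, Real.cos_zero, mul_one, zero_mul, add_zero,
      hb2e, hb3e, hS, hC]
    field_simp [hat, hbne2, hbne3, hcne, hwpos.ne', htpos.ne']
    linear_combination (0) * hw2
  · -- case i=2, j=1
    show pairing a (psifun a 2) (zfun a 1) = 0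
    have hI := intervalIntegral.integral_congr (a := (0:ℝ)) (b := 1) (μ := MeasureTheory.volume)
      (f := fun s => (psifun a 2 s).2 * (tau0 a * (zfun a 1 (s - 1)).1))
      (g := fun s => (tau0 a * (0 * 0)) + (tau0 a * (0 * Real.cos (tau0 a * omega0 a) + (2 * bb3 a * (1 / (2 * (bb2 a ^ 2 + bb3 a ^ 2)))) * 0)) * Real.sin (tau0 a * omega0 a * s)
        + (tau0 a * (0 * (-Real.sin (tau0 a * omega0 a)) + (-2 * bb2 a * (1 / (2 * (bb2 a ^ 2 + bb3 a ^ 2)))) * 0)) * Real.cos (tau0 a * omega0 a * s)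
        + (tau0 a * ((2 * bb3 a * (1 / (2 * (bb2 a ^ 2 + bb3 a ^ 2)))) * Real.cos (tau0 a * omega0 a))) * Real.sin (tau0 a * omega0 a * s) ^ 2
        + (tau0 a * ((-2 * bb2 a * (1 / (2 * (bb2 a ^ 2 + bb3 a ^ 2)))) * (-Real.sin (tau0 a * omega0 a)))) * Real.cos (tau0 a * omega0 a * s) ^ 2
        + (tau0 a * ((2 * bb3 a * (1 / (2 * (bb2 a ^ 2 + bb3 a ^ 2)))) * (-Real.sin (tau0 a * omega0 a)) + (-2 * bb2 a * (1 / (2 * (bb2 a ^ 2 + bb3 a ^ 2)))) * Real.cos (tau0 a * omega0 a))) * (Real.sin (tau0 a * omega0 a * s) * Real.cos (tau0 a * omega0 a * s)))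
      (fun s _ => by
        have hx : tau0 a * omega0 a * (s - 1) = tau0 a * omega0 a * s - tau0 a * omega0 a := by
          ring
        simp only [psifun, zfun, hx, Real.sin_sub, Real.cos_sub]
        ring)
    unfold pairing
    rw [hI, master (tau0 a * omega0 a) hcne]
    simp only [psifun, zfun, mul_zero, Real.sin_zero, Real.cos_zero, mul_one, zero_mul, add_zero,
      hb2e, hb3e, hS, hC]
    field_simp [hat, hbne2, hbne3, hcne, hwpos.ne', htpos.ne']
    linear_combination ((2)*a^3*(omega0 a)^1 + (-1)*a^4*(tau0 a)^1*(omega0 a)^1) * hw2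
  · -- case i=2, j=2
    show pairing a (psifun a 2) (zfun a 2) = 1
    have hI := intervalIntegral.integral_congr (a := (0:ℝ)) (b := 1) (μ := MeasureTheory.volume)
      (f := fun s => (psifun a 2 s).2 * (tau0 a * (zfun a 2 (s - 1)).1))
      (g := fun s => (tau0 a * (0 * 0)) + (tau0 a * (0 * Real.sin (tau0 a * omega0 a) + (2 * bb3 a * (1 / (2 * (bb2 a ^ 2 + bb3 a ^ 2)))) * 0)) * Real.sin (tau0 a * omega0 a * s)
        + (tau0 a * (0 * Real.cos (tau0 a * omega0 a) + (-2 * bb2 a * (1 / (2 * (bb2 a ^ 2 + bb3 a ^ 2)))) * 0)) * Real.cos (tau0 a * omega0 a * s)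
        + (tau0 a * ((2 * bb3 a * (1 / (2 * (bb2 a ^ 2 + bb3 a ^ 2)))) * Real.sin (tau0 a * omega0 a))) * Real.sin (tau0 a * omega0 a * s) ^ 2
        + (tau0 a * ((-2 * bb2 a * (1 / (2 * (bb2 a ^ 2 + bb3 a ^ 2)))) * Real.cos (tau0 a * omega0 a))) * Real.cos (tau0 a * omega0 a * s) ^ 2
        + (tau0 a * ((2 * bb3 a * (1 / (2 * (bb2 a ^ 2 + bb3 a ^ 2)))) * Real.cos (tau0 a * omega0 a) + (-2 * bb2 a * (1 / (2 * (bb2 a ^ 2 + bb3 a ^ 2)))) * Real.sin (tau0 a * omega0 a))) * (Real.sin (tau0 a * omega0 a * s) * Real.cos (tau0 a * omega0 a * s)))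
      (fun s _ => by
        have hx : tau0 a * omega0 a * (s - 1) = tau0 a * omega0 a * s - tau0 a * omega0 a := by
          ring
        simp only [psifun, zfun, hx, Real.sin_sub, Real.cos_sub]
        ring)
    unfold pairing
    rw [hI, master (tau0 a * omega0 a) hcne]
    simp only [psifun, zfun, mul_zero, Real.sin_zero, Real.cos_zero, mul_one, zero_mul, add_zero,
      hb2e, hb3e, hS, hC]
    field_simp [hat, hbne2, hbne3, hcne, hwpos.ne', htpos.ne']
    linear_combination ((-4) + (2)*a^1*(tau0 a)^1 + (-1)*a^3*(tau0 a)^1 + (-1)*a^4 + (1)*a^5*(tau0 a)^1) * hw2
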